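/- If ∫₀^∞ 1/w(x) dx < ∞, then every g ∈ H_w is bounded with sup_{x≥0} |g(x)| ≤ c ‖g‖_w where c = √(1 + ∫₀^∞ 1/w(x) dx). Moreover the function h_∞(x) = 1 + ∫₀^x 1/w(s) ds belongs to H_w and lim_{x→∞} g(x) = ⟨h_∞, g⟩_w for every g ∈ H_w. -/

import Mathlib

open MeasureTheory Set Filter

noncomputable section

/-- Inner product on the Filipović space `H_w`, for functions `g, h` with chosen
(weak) derivatives `g', h'`:  `⟨g,h⟩_w = g(0)h(0) + ∫₀^∞ w g' h'`. -/
def wInner (w g g' h h' : ℝ → ℝ) : ℝ :=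
  g 0 * h 0 + ∫ x in Ioi (0:ℝ), w x * g' x * h' x

/-- Norm on the Filipović space `H_w`. -/
def wNorm (w g g' : ℝ → ℝ) : ℝ := Real.sqrt (wInner w g g' g g')

/-- `w : ℝ≥0 → [1,∞)` continuous, increasing, with `w 0 = 1`. -/
structure IsWeight (w : ℝ → ℝ) : Prop where
  cont : ContinuousOn w (Ici 0)
  mono : MonotoneOn w (Ici 0)
  one_le : ∀ x ∈ Ici (0:ℝ), 1 ≤ w x
  at_zero : w 0 = 1

/-- `g ∈ H_w` with derivative `g'`: `g` is absolutely continuous on `[0,∞)` with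
a.e. derivative `g'`, and `∫₀^∞ w (g')² < ∞`. -/
def MemHw (w g g' : ℝ → ℝ) : Prop :=
  (∀ x ∈ Ici (0:ℝ), g x = g 0 + ∫ t in Ioc (0:ℝ) x, g' t) ∧
  (∀ x ∈ Ici (0:ℝ), IntegrableOn g' (Ioc 0 x)) ∧
  IntegrableOn (fun x => w x * g' x ^ 2) (Ioi 0)

/-- The reproducing kernel `h_x(y) = 1 + ∫₀^{min(x,y)} 1/w(s) ds`. -/
def hker (w : ℝ → ℝ) (x y : ℝ) : ℝ := 1 + ∫ s in Ioc (0:ℝ) (min x y), 1 / w s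

/-- Derivative of `h_x`. -/
def hker' (w : ℝ → ℝ) (x : ℝ) : ℝ → ℝ := (Iic x).indicator (fun s => 1 / w s)

/-- Cauchy–Schwarz estimate: `∫_s |g'| ≤ √(∫_s 1/w) √(∫_s w g'²)`. -/
lemma cs_bound {w g' : ℝ → ℝ} (hw : IsWeight w) {s : Set ℝ} (hs : MeasurableSet s)
    (hsub : s ⊆ Ioi 0)
    (h1w : IntegrableOn (fun x => 1 / w x) s)
    (hg2 : IntegrableOn (fun x => w x * g' x ^ 2) s) :
    ∫ x in s, |g' x| ≤
      Real.sqrt (∫ x in s, 1 / w x) * Real.sqrt (∫ x in s, w x * g' x ^ 2) := by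
  set f₁ : ℝ → ℝ := fun x => Real.sqrt (1 / w x) with hf₁
  set f₂ : ℝ → ℝ := fun x => Real.sqrt (w x * g' x ^ 2) with hf₂
  have hm₁ : AEStronglyMeasurable f₁ (volume.restrict s) :=
    Real.continuous_sqrt.comp_aestronglyMeasurable h1w.aestronglyMeasurable
  have hm₂ : AEStronglyMeasurable f₂ (volume.restrict s) :=
    Real.continuous_sqrt.comp_aestronglyMeasurable hg2.aestronglyMeasurable
  have hwpos : ∀ᵐ x ∂(volume.restrict s), 0 < w x := by
    filter_upwards [ae_restrict_mem hs] with x hx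
    exact lt_of_lt_of_le one_pos (hw.one_le x (mem_Ici.mpr (le_of_lt (hsub hx))))
  have hsq₁ : (fun x => f₁ x ^ 2) =ᵐ[volume.restrict s] fun x => 1 / w x := by
    filter_upwards [hwpos] with x hx
    simp only [hf₁]
    rw [Real.sq_sqrt (by positivity)]
  have hsq₂ : (fun x => f₂ x ^ 2) =ᵐ[volume.restrict s] fun x => w x * g' x ^ 2 := by
    filter_upwards [hwpos] with x hx
    simp only [hf₂]
    rw [Real.sq_sqrt (by positivity)]
  have hL₁ : MemLp f₁ 2 (volume.restrict s) :=
    (memLp_two_iff_integrable_sq hm₁).2 (h1w.congr hsq₁.symm)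
  have hL₂ : MemLp f₂ 2 (volume.restrict s) :=
    (memLp_two_iff_integrable_sq hm₂).2 (hg2.congr hsq₂.symm)
  have hpq : Real.HolderConjugate 2 2 := Real.HolderConjugate.two_two
  have h2 : ENNReal.ofReal (2:ℝ) = 2 := by norm_num
  have key := MeasureTheory.integral_mul_le_Lp_mul_Lq_of_nonneg hpq
    (μ := volume.restrict s)
    (Eventually.of_forall fun x => Real.sqrt_nonneg _)
    (Eventually.of_forall fun x => Real.sqrt_nonneg _)
    (by rw [h2]; exact hL₁) (by rw [h2]; exact hL₂)
  have hrpow : ∀ y : ℝ, y ^ (2:ℝ) = y ^ 2 := fun y => by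
    rw [show (2:ℝ) = ((2:ℕ):ℝ) by norm_num, Real.rpow_natCast]
  simp only [hrpow] at key
  have heqL : (fun x => |g' x|) =ᵐ[volume.restrict s] fun x => f₁ x * f₂ x := by
    filter_upwards [hwpos] with x hx
    rw [hf₁, hf₂, ← Real.sqrt_mul (by positivity)]
    rw [show 1 / w x * (w x * g' x ^ 2) = g' x ^ 2 by field_simp, Real.sqrt_sq_eq_abs]
  have hi₁ : ∫ x in s, f₁ x ^ 2 = ∫ x in s, 1 / w x := integral_congr_ae hsq₁
  have hi₂ : ∫ x in s, f₂ x ^ 2 = ∫ x in s, w x * g' x ^ 2 := integral_congr_ae hsq₂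
  rw [hi₁, hi₂] at key
  calc ∫ x in s, |g' x| = ∫ x in s, f₁ x * f₂ x := integral_congr_ae heqL
    _ ≤ (∫ x in s, 1 / w x) ^ (1/(2:ℝ)) * (∫ x in s, w x * g' x ^ 2) ^ (1/(2:ℝ)) := key
    _ = Real.sqrt (∫ x in s, 1 / w x) * Real.sqrt (∫ x in s, w x * g' x ^ 2) := by
        rw [← Real.sqrt_eq_rpow, ← Real.sqrt_eq_rpow]

/-- if `∫₀^∞ 1/w < ∞` then every `g ∈ H_w` satisfies
`|g(x)| ≤ c ‖g‖_w` with `c = √(1 + ∫₀^∞ 1/w)`, the function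
`h_∞(x) = 1 + ∫₀^x 1/w` belongs to `H_w`, and `g(x) → ⟨h_∞, g⟩_w` as `x → ∞`. -/
theorem stmt2 (w : ℝ → ℝ) (hw : IsWeight w)
    (hk : IntegrableOn (fun x => 1 / w x) (Ioi 0)) :
    (∀ g g' : ℝ → ℝ, MemHw w g g' → ∀ x ∈ Ici (0:ℝ),
      |g x| ≤ Real.sqrt (1 + ∫ s in Ioi (0:ℝ), 1 / w s) * wNorm w g g') ∧
    MemHw w (fun x => 1 + ∫ s in Ioc (0:ℝ) x, 1 / w s) (fun s => 1 / w s) ∧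
    (∀ g g' : ℝ → ℝ, MemHw w g g' →
      Tendsto g atTop
        (nhds (wInner w (fun x => 1 + ∫ s in Ioc (0:ℝ) x, 1 / w s) (fun s => 1 / w s) g g'))) := by
  have hwpos : ∀ x, x ∈ Ioi (0:ℝ) → 0 < w x := fun x hx =>
    lt_of_lt_of_le one_pos (hw.one_le x (mem_Ici.mpr (le_of_lt hx)))
  have h1wnn : 0 ≤ᵐ[volume.restrict (Ioi (0:ℝ))] fun x => 1 / w x := by
    filter_upwards [ae_restrict_mem measurableSet_Ioi] with x hx
    have := hwpos x hx; positivity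
  set K : ℝ := ∫ s in Ioi (0:ℝ), 1 / w s with hKdef
  have hK0 : 0 ≤ K := integral_nonneg_of_ae h1wnn
  refine ⟨?_, ?_, ?_⟩
  · -- Part 1
    intro g g' hg x hx
    obtain ⟨hg1, hg2, hg3⟩ := hg
    have hwg2nn : 0 ≤ᵐ[volume.restrict (Ioi (0:ℝ))] fun t => w t * g' t ^ 2 := by
      filter_upwards [ae_restrict_mem measurableSet_Ioi] with t ht
      have := hwpos t ht; positivity
    set E : ℝ := ∫ t in Ioi (0:ℝ), w t * g' t ^ 2 with hEdef
    have hE0 : 0 ≤ E := integral_nonneg_of_ae hwg2nn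
    have hsub : Ioc (0:ℝ) x ⊆ Ioi 0 := Ioc_subset_Ioi_self
    have h1wx : IntegrableOn (fun t => 1 / w t) (Ioc 0 x) := hk.mono_set hsub
    have hg3x : IntegrableOn (fun t => w t * g' t ^ 2) (Ioc 0 x) := hg3.mono_set hsub
    have cs := cs_bound hw measurableSet_Ioc hsub h1wx hg3x
    have hKx : ∫ t in Ioc (0:ℝ) x, 1 / w t ≤ K :=
      setIntegral_mono_set hk h1wnn (HasSubset.Subset.eventuallyLE hsub)
    have hEx : ∫ t in Ioc (0:ℝ) x, w t * g' t ^ 2 ≤ E :=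
      setIntegral_mono_set hg3 hwg2nn (HasSubset.Subset.eventuallyLE hsub)
    have habs : |∫ t in Ioc (0:ℝ) x, g' t| ≤ ∫ t in Ioc (0:ℝ) x, |g' t| := by
      simpa [Real.norm_eq_abs] using
        norm_integral_le_integral_norm (μ := volume.restrict (Ioc (0:ℝ) x)) g'
    have hx10 : (0:ℝ) ≤ ∫ t in Ioc (0:ℝ) x, 1 / w t :=
      integral_nonneg_of_ae <| by
        filter_upwards [ae_restrict_mem measurableSet_Ioc] with t ht
        have := hwpos t (hsub ht); positivity
    have h1 : |g x| ≤ |g 0| + Real.sqrt K * Real.sqrt E := by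
      have hmono : Real.sqrt (∫ t in Ioc (0:ℝ) x, 1 / w t) *
            Real.sqrt (∫ t in Ioc (0:ℝ) x, w t * g' t ^ 2) ≤
            Real.sqrt K * Real.sqrt E := by
        exact mul_le_mul (Real.sqrt_le_sqrt hKx) (Real.sqrt_le_sqrt hEx)
          (Real.sqrt_nonneg _) (Real.sqrt_nonneg _)
      calc |g x| = |g 0 + ∫ t in Ioc (0:ℝ) x, g' t| := by rw [hg1 x hx]
        _ ≤ |g 0| + |∫ t in Ioc (0:ℝ) x, g' t| := abs_add_le _ _
        _ ≤ |g 0| + Real.sqrt K * Real.sqrt E := by linarith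
    have hEint : (∫ t in Ioi (0:ℝ), w t * g' t * g' t) = E := by
      rw [hEdef]; exact integral_congr_ae (Eventually.of_forall fun t => by ring)
    have hnorm : wNorm w g g' = Real.sqrt (g 0 ^ 2 + E) := by
      rw [wNorm, wInner, hEint, ← sq]
    rw [hnorm]
    have hsq : (|g 0| + Real.sqrt K * Real.sqrt E) ^ 2 ≤ (1 + K) * (g 0 ^ 2 + E) := by
      have h2 : Real.sqrt K ^ 2 = K := Real.sq_sqrt hK0
      have h3 : Real.sqrt E ^ 2 = E := Real.sq_sqrt hE0
      have h4 : |g 0| ^ 2 = g 0 ^ 2 := sq_abs _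
      nlinarith [sq_nonneg (Real.sqrt K * |g 0| - Real.sqrt E), Real.sqrt_nonneg K,
        Real.sqrt_nonneg E, abs_nonneg (g 0)]
    calc |g x| ≤ |g 0| + Real.sqrt K * Real.sqrt E := h1
      _ = Real.sqrt ((|g 0| + Real.sqrt K * Real.sqrt E) ^ 2) :=
          (Real.sqrt_sq (by positivity)).symm
      _ ≤ Real.sqrt ((1 + K) * (g 0 ^ 2 + E)) := Real.sqrt_le_sqrt hsq
      _ = Real.sqrt (1 + K) * Real.sqrt (g 0 ^ 2 + E) := Real.sqrt_mul (by linarith) _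
  · -- Part 2
    refine ⟨?_, ?_, ?_⟩
    · intro x hx; simp
    · intro x hx; exact hk.mono_set Ioc_subset_Ioi_self
    · refine hk.congr ?_
      filter_upwards [ae_restrict_mem measurableSet_Ioi] with x hx
      have h0 := hwpos x hx
      field_simp
  · -- Part 3
    intro g g' hg
    obtain ⟨hg1, hg2, hg3⟩ := hg
    have hmeas : AEStronglyMeasurable g' (volume.restrict (Ioi (0:ℝ))) := by
      have hU : Ioi (0:ℝ) = ⋃ n : ℕ, Ioc (0:ℝ) n := by
        ext t; simp only [mem_Ioi, mem_iUnion, mem_Ioc]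
        constructor
        · intro ht; obtain ⟨n, hn⟩ := exists_nat_gt t; exact ⟨n, ht, hn.le⟩
        · rintro ⟨n, ht, _⟩; exact ht
      rw [hU, aestronglyMeasurable_iUnion_iff]
      exact fun n => (hg2 n (mem_Ici.mpr (Nat.cast_nonneg n))).aestronglyMeasurable
    have hint : IntegrableOn g' (Ioi (0:ℝ)) := by
      refine Integrable.mono' (hk.add hg3) hmeas ?_
      filter_upwards [ae_restrict_mem measurableSet_Ioi] with x hx
      have hw0 := hwpos x hx
      have hkey : 0 ≤ w x ^ 2 * g' x ^ 2 + 1 - w x * |g' x| := by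
        nlinarith [sq_nonneg (w x * |g' x| - 1), sq_abs (g' x)]
      simp only [Pi.add_apply]
      rw [Real.norm_eq_abs, ← sub_nonneg]
      have heq : 1 / w x + w x * g' x ^ 2 - |g' x|
          = (w x ^ 2 * g' x ^ 2 + 1 - w x * |g' x|) / w x := by
        field_simp
        ring
      rw [heq]
      exact div_nonneg hkey hw0.le
    have hval : wInner w (fun x => 1 + ∫ s in Ioc (0:ℝ) x, 1 / w s) (fun s => 1 / w s) g g'
        = g 0 + ∫ t in Ioi (0:ℝ), g' t := by
      have hi : (∫ x in Ioi (0:ℝ), w x * (1 / w x) * g' x) = ∫ t in Ioi (0:ℝ), g' t := by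
        refine integral_congr_ae ?_
        filter_upwards [ae_restrict_mem measurableSet_Ioi] with x hx
        have h0 := hwpos x hx
        field_simp
      simp only [wInner]
      rw [hi]
      simp [Ioc_self]
    rw [hval]
    have hlim : Tendsto (fun x => ∫ t in (0:ℝ)..x, g' t) atTop (nhds (∫ t in Ioi (0:ℝ), g' t)) :=
      intervalIntegral_tendsto_integral_Ioi 0 hint tendsto_id
    have htot : Tendsto (fun x => g 0 + ∫ t in (0:ℝ)..x, g' t) atTop
        (nhds (g 0 + ∫ t in Ioi (0:ℝ), g' t)) := tendsto_const_nhds.add hlim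
    refine Tendsto.congr' ?_ htot
    filter_upwards [eventually_ge_atTop (0:ℝ)] with x hx
    rw [intervalIntegral.integral_of_le hx]
    exact (hg1 x hx).symm
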